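/- arXiv:1804.03945 — 3 statements merged into one kernel-verified Lean document; each statement's English description precedes it below -/
import Mathlib

section
/- Let W : ℝ/2πℤ × ℝ/2πℤ → U(r) be a continuous map satisfying W(k_x, -k_y) · W(k_x, k_y) = e^{i k_x} · 1 for all (k_x, k_y). Then r is even; more precisely, if d denotes the winding number of the map k_x ↦ det W(k_x, 0) : ℝ/2πℤ → U(1), then 2d = r. -/
open Real

/-- If a continuous `2π`-periodic family `W : ℝ/2πℤ × ℝ/2πℤ → U(r)` satisfies
`W(k_x, -k_y) W(k_x, k_y) = e^{i k_x} · 1`, and `d` is the winding number of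
`k_x ↦ det W(k_x, 0)` (given via a continuous phase lift `θ`), then `2d = r`;
in particular `r` is even. -/
theorem winding_of_glide_symbol_is_half_rank
    (r : ℕ) (W : ℝ → ℝ → Matrix (Fin r) (Fin r) ℂ)
    (hWcont : Continuous fun p : ℝ × ℝ => W p.1 p.2)
    (hWperx : ∀ x y, W (x + 2 * π) y = W x y)
    (hWpery : ∀ x y, W x (y + 2 * π) = W x y)
    (hWunit : ∀ x y, W x y ∈ Matrix.unitaryGroup (Fin r) ℂ)
    (hWrel : ∀ x y, W x (-y) * W x y = Complex.exp (Complex.I * x) • 1)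
    (θ : ℝ → ℝ) (hθ : Continuous θ)
    (hdet : ∀ x, (W x 0).det = Complex.exp (Complex.I * θ x))
    (d : ℤ) (hwind : ∀ x, θ (x + 2 * π) = θ x + 2 * π * (d : ℝ)) :
    2 * d = (r : ℤ) := by
  -- Step 1: for each x, 2 θ x - r x ∈ 2π ℤ.
  have key : ∀ x : ℝ, ∃ n : ℤ, 2 * θ x - r * x = n * (2 * π) := by
    intro x
    have h0 := hWrel x 0
    rw [neg_zero] at h0
    have hdet2 : Complex.exp (Complex.I * (2 * θ x)) =
        Complex.exp (Complex.I * (r * x)) := by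
      have h1 : ((W x 0) * (W x 0)).det = Complex.exp (Complex.I * x) ^ r := by
        rw [h0, Matrix.det_smul, Matrix.det_one, mul_one]
        simp [Fintype.card_fin]
      rw [Matrix.det_mul, hdet] at h1
      rw [← Complex.exp_add] at h1
      rw [← Complex.exp_nat_mul] at h1
      rw [show Complex.I * (2 * θ x) = Complex.I * θ x + Complex.I * θ x by push_cast; ring,
        show Complex.I * (r * x) = r * (Complex.I * x) by push_cast; ring]
      exact h1
    rw [Complex.exp_eq_exp_iff_exists_int] at hdet2
    obtain ⟨n, hn⟩ := hdet2
    refine ⟨n, ?_⟩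
    have : Complex.I * (2 * θ x) = Complex.I * (r * x + n * (2 * π)) := by
      rw [hn]; push_cast; ring
    have h2 := mul_left_cancel₀ Complex.I_ne_zero this
    have h3 : ((2 * θ x : ℝ) : ℂ) = ((r * x + n * (2 * π) : ℝ) : ℂ) := by
      push_cast; push_cast at h2; exact h2
    have h4 := Complex.ofReal_injective h3
    linarith
  -- Step 2: g x := (2 θ x - r x)/(2π) is continuous, integer valued
  set g : ℝ → ℝ := fun x => (2 * θ x - r * x) / (2 * π) with hg
  have hπ : (0:ℝ) < 2 * π := by positivity
  have hgc : Continuous g := by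
    apply Continuous.div_const
    exact (continuous_const.mul hθ).sub (continuous_const.mul continuous_id)
  have hint : ∀ x, ∃ n : ℤ, g x = n := by
    intro x
    obtain ⟨n, hn⟩ := key x
    exact ⟨n, by show (2 * θ x - r * x) / (2 * π) = n; rw [hn]; field_simp⟩
  obtain ⟨n0, hn0⟩ := hint 0
  have hg2π : g (2 * π) = n0 + (2 * d - r) := by
    have hw := hwind 0
    rw [zero_add] at hw
    have : g (2 * π) = g 0 + (2 * d - r) := by
      simp only [hg, hw]
      field_simp
      ring
    rw [this, hn0]
  -- Step 3: IVT contradiction if 2d ≠ r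
  by_contra hne
  have hD : (2 * d - r : ℤ) ≠ 0 := by omega
  have hiv := intermediate_value_uIcc (f := g) (a := 0) (b := 2 * π) hgc.continuousOn
  have habs : ∃ x, g x = n0 + 1/2 ∨ g x = n0 - 1/2 := by
    rcases lt_or_gt_of_ne hD with h | h
    · have hmem : (n0 - 1/2 : ℝ) ∈ Set.uIcc (g 0) (g (2 * π)) := by
        rw [hn0, hg2π]
        have : (2 * d - r : ℝ) ≤ -1 := by
          have : (2 * d - r : ℤ) ≤ -1 := by omega
          exact_mod_cast this
        rw [Set.mem_uIcc]; right; constructor <;> linarith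
      obtain ⟨x, _, hx⟩ := hiv hmem
      exact ⟨x, Or.inr hx⟩
    · have hmem : (n0 + 1/2 : ℝ) ∈ Set.uIcc (g 0) (g (2 * π)) := by
        rw [hn0, hg2π]
        have : (1:ℝ) ≤ (2 * d - r : ℝ) := by
          have : (1:ℤ) ≤ 2 * d - r := by omega
          exact_mod_cast this
        rw [Set.mem_uIcc]; left; constructor <;> linarith
      obtain ⟨x, _, hx⟩ := hiv hmem
      exact ⟨x, Or.inl hx⟩
  obtain ⟨x, hx⟩ := habs
  obtain ⟨m, hm⟩ := hint x
  rcases hx with hx | hx <;>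
  · rw [hm] at hx
    have : (2 * m : ℝ) = 2 * n0 + 1 ∨ (2 * m : ℝ) = 2 * n0 - 1 := by
      first
      | exact Or.inl (by push_cast; linarith)
      | exact Or.inr (by push_cast; linarith)
    rcases this with h | h <;>
    · have := (by exact_mod_cast h : (2 * m : ℤ) = _)
      omega
end

section
/- Let ζ : ℝ/2πℤ → U(1) be a continuous map satisfying ζ(ℓ + π) = conjugate(ζ(ℓ)) for all ℓ. Then the winding number of ζ around the circle is zero. -/
open Real

/-- A continuous `2π`-periodic map `ζ : ℝ/2πℤ → U(1)` satisfying
`ζ(ℓ + π) = conj(ζ(ℓ))` has winding number zero: for any continuous phase lift `θ`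
with winding number `d`, necessarily `d = 0`. -/
theorem equivariant_circle_map_has_zero_winding
    (ζ : ℝ → ℂ) (hcont : Continuous ζ)
    (hper : ∀ ℓ, ζ (ℓ + 2 * π) = ζ ℓ)
    (hnorm : ∀ ℓ, ‖ζ ℓ‖ = 1)
    (hequiv : ∀ ℓ, ζ (ℓ + π) = starRingEnd ℂ (ζ ℓ)) :
    ∀ (θ : ℝ → ℝ) (d : ℤ), Continuous θ →
      (∀ ℓ, ζ ℓ = Complex.exp (Complex.I * θ ℓ)) →
      (∀ ℓ, θ (ℓ + 2 * π) = θ ℓ + 2 * π * (d : ℝ)) →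
      d = 0 := by
  intro θ d hθc hθ hwind
  set f : ℝ → ℝ := fun ℓ => θ (ℓ + π) + θ ℓ with hf
  have hfc : Continuous f := (hθc.comp (continuous_id.add continuous_const)).add hθc
  have hmem : ∀ ℓ, f ℓ ∈ (AddSubgroup.zmultiples (2 * π) : AddSubgroup ℝ) := by
    intro ℓ
    have h1 : Complex.exp (Complex.I * θ (ℓ + π)) * Complex.exp (Complex.I * θ ℓ) = 1 := by
      rw [← hθ, hequiv ℓ, hθ ℓ, ← Complex.exp_conj, ← Complex.exp_add]
      have : (starRingEnd ℂ) (Complex.I * θ ℓ) + Complex.I * θ ℓ = 0 := by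
        simp [Complex.ext_iff]
      rw [this, Complex.exp_zero]
    rw [← Complex.exp_add, ← mul_add] at h1
    obtain ⟨n, hn⟩ := Complex.exp_eq_one_iff.mp h1
    have : ((θ (ℓ + π) + θ ℓ : ℝ) : ℂ) = (n : ℂ) * (2 * π) := by
      have h2 : Complex.I * ((θ (ℓ + π) : ℂ) + (θ ℓ : ℂ)) =
          Complex.I * ((n : ℂ) * (2 * (π : ℂ))) := by rw [hn]; ring
      have h3 := mul_left_cancel₀ Complex.I_ne_zero h2
      push_cast
      exact h3
    have hr : θ (ℓ + π) + θ ℓ = (n : ℝ) * (2 * π) := by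
      exact_mod_cast this
    exact ⟨n, by simp only [hf, zsmul_eq_mul]; rw [hr]⟩
  have hconst : f 0 = f π := by
    have : DiscreteTopology (AddSubgroup.zmultiples (2 * π) : AddSubgroup ℝ) := inferInstance
    exact IsPreconnected.constant_of_mapsTo (isPreconnected_univ)
      (β := ℝ) (T := (AddSubgroup.zmultiples (2 * π) : AddSubgroup ℝ))
      (isDiscrete_iff_discreteTopology.mpr this) hfc.continuousOn (fun x _ => hmem x) (Set.mem_univ 0) (Set.mem_univ π)
  have h2 : θ (π + π) = θ (0 + 2 * π) := by norm_num [two_mul]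
  have h0 : θ (0 + 2 * π) = θ 0 + 2 * π * d := hwind 0
  simp only [hf, zero_add] at hconst
  rw [h2, h0] at hconst
  have hπ : (2 : ℝ) * π ≠ 0 := by positivity
  have : 2 * π * (d : ℝ) = 0 := by linarith
  have : (d : ℝ) = 0 := by
    rcases mul_eq_zero.mp this with h | h
    · exact absurd h hπ
    · exact h
  exact_mod_cast this
end

section
/- On the Hilbert space L²(S¹) ⊗ ℂ² with S¹ = ℝ/2πℤ (variable k_y), fix k_x ∈ ℝ/2πℤ and define the unitary Ṽ = I ∘ M, where (I ψ)(k_y) = ψ(−k_y) and M is pointwise multiplication by e^{i k_y} V(k_x) with V(k_x) = ((0, e^{ik_x}), (1, 0)). Then Ṽ² = e^{ik_x} · 1, and Ṽ anticommutes with the grading ε whose +1 eigenspace is the closed span of {e^{ily} ⊗ v : l ≥ 0} and −1 eigenspace the closed span of {e^{ily} ⊗ v : l ≤ −1}. -/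
/-- The edge glide reflection operator. On `L²(S¹) ⊗ ℂ²`, modelled as a Hilbert space
with Hilbert basis `e_{(l,i)}` indexed by the Fourier mode `l ∈ ℤ` and `i ∈ Fin 2`,
the unitary `Ṽ = I ∘ M` (inversion composed with multiplication by `e^{i k_y} V(k_x)`,
`V(k_x) = (0, e^{ik_x}; 1, 0)`) acts on basis vectors by
`Ṽ e_{(l,0)} = e_{(-(l+1),1)}` and `Ṽ e_{(l,1)} = e^{ik_x} e_{(-(l+1),0)}`.
It satisfies `Ṽ² = e^{ik_x}·1` and anticommutes with the Hardy grading `ε` whose `±1`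
eigenspaces are spanned by the modes with `l ≥ 0`, resp. `l ≤ -1`. -/
theorem edge_glide_reflection_squares_to_shift
    {H : Type*} [NormedAddCommGroup H] [InnerProductSpace ℂ H] [CompleteSpace H]
    (e : HilbertBasis (ℤ × Fin 2) ℂ H) (kx : ℝ)
    (Vt : H →L[ℂ] H)
    (hV0 : ∀ l : ℤ, Vt (e (l, 0)) = e (-(l + 1), 1))
    (hV1 : ∀ l : ℤ, Vt (e (l, 1)) = Complex.exp (Complex.I * kx) • e (-(l + 1), 0))
    (ε : H →L[ℂ] H)
    (hε : ∀ (l : ℤ) (i : Fin 2), ε (e (l, i)) = if 0 ≤ l then e (l, i) else -e (l, i)) :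
    (∀ v, ‖Vt v‖ = ‖v‖) ∧
    Vt ∘L Vt = Complex.exp (Complex.I * kx) • (1 : H →L[ℂ] H) ∧
    Vt ∘L ε = -(ε ∘L Vt) := by
  set c : ℂ := Complex.exp (Complex.I * kx) with hc
  have hc0 : c ≠ 0 := Complex.exp_ne_zero _
  have hconj : (starRingEnd ℂ) c = c⁻¹ := by
    rw [hc, ← Complex.exp_conj, ← Complex.exp_neg]
    congr 1
    simp [Complex.conj_I]
  have hcinv : c⁻¹ * c = 1 := inv_mul_cancel₀ hc0
  have hfin : ∀ i : Fin 2, i = 0 ∨ i = 1 := by decide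
  -- extensionality on the Hilbert basis
  have hext : ∀ (f g : H →L[ℂ] H), (∀ p : ℤ × Fin 2, f (e p) = g (e p)) → f = g := by
    intro f g h
    have hd : Dense ((Submodule.span ℂ (Set.range ⇑e) : Submodule ℂ H) : Set H) :=
      Submodule.dense_iff_topologicalClosure_eq_top.mpr e.dense_span
    refine ContinuousLinearMap.ext_on hd ?_
    rintro x ⟨p, rfl⟩
    exact h p
  -- extensionality of vectors via inner products with the basis
  have hvec : ∀ x y : H, (∀ p : ℤ × Fin 2, (inner ℂ (e p) x : ℂ) = inner ℂ (e p) y) → x = y := by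
    intro x y h
    apply e.repr.injective
    ext p
    rw [e.repr_apply_apply, e.repr_apply_apply]
    exact h p
  have hon : ∀ p q : ℤ × Fin 2, (inner ℂ (e p) (e q) : ℂ) = if p = q then 1 else 0 :=
    orthonormal_iff_ite.mp e.orthonormal
  -- the square
  have hsq : Vt ∘L Vt = c • (1 : H →L[ℂ] H) := by
    apply hext
    rintro ⟨l, i⟩
    have h2 : (-(-(l + 1) + 1) : ℤ) = l := by ring
    rcases hfin i with hi | hi <;> subst hi
    · rw [ContinuousLinearMap.comp_apply, hV0 l, hV1 (-(l + 1)), h2,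
        ContinuousLinearMap.smul_apply, ContinuousLinearMap.one_apply]
    · rw [ContinuousLinearMap.comp_apply, hV1 l, map_smul, hV0 (-(l + 1)), h2,
        ContinuousLinearMap.smul_apply, ContinuousLinearMap.one_apply]
  -- anticommutation with the grading
  have hanti : Vt ∘L ε = -(ε ∘L Vt) := by
    apply hext
    rintro ⟨l, i⟩
    rw [ContinuousLinearMap.comp_apply, ContinuousLinearMap.neg_apply,
      ContinuousLinearMap.comp_apply, hε l i]
    by_cases h0 : 0 ≤ l
    · have h2 : ¬ (0 ≤ -(l + 1)) := by omega
      rcases hfin i with hi | hi <;> subst hi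
      · rw [if_pos h0, hV0 l, hε, if_neg h2, neg_neg]
      · rw [if_pos h0, hV1 l, map_smul, hε, if_neg h2, smul_neg, neg_neg]
    · have h2 : 0 ≤ -(l + 1) := by omega
      rcases hfin i with hi | hi <;> subst hi
      · rw [if_neg h0, map_neg, hV0 l, hε, if_pos h2]
      · rw [if_neg h0, map_neg, hV1 l, map_smul, hε, if_pos h2]
  -- inner product identity for the adjoint
  have key : ∀ (l m : ℤ) (i j : Fin 2),
      (inner ℂ (Vt (e (m, j))) (e (l, i)) : ℂ) = c⁻¹ * inner ℂ (e (m, j)) (Vt (e (l, i))) := by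
    intro l m i j
    rcases hfin i with hi | hi <;> rcases hfin j with hj | hj <;> subst hi <;> subst hj
    · rw [hV0 m, hV0 l, hon, hon, if_neg (by simp), if_neg (by simp)]
      ring
    · rw [hV1 m, hV0 l, inner_smul_left, hon, hon, hconj]
      have hcond : (((-(m + 1) : ℤ), (0 : Fin 2)) = (l, 0)) ↔
          ((m, (1 : Fin 2)) = (-(l + 1), 1)) := by
        simp only [Prod.mk.injEq, and_true]
        omega
      rw [if_congr hcond rfl rfl]
    · rw [hV0 m, hV1 l, inner_smul_right, hon, hon]
      have hcond : (((-(m + 1) : ℤ), (1 : Fin 2)) = (l, 1)) ↔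
          ((m, (0 : Fin 2)) = (-(l + 1), 0)) := by
        simp only [Prod.mk.injEq, and_true]
        omega
      rw [if_congr hcond rfl rfl]
      by_cases h : ((m : ℤ), (0 : Fin 2)) = (-(l + 1), 0)
      · rw [if_pos h, mul_one, hcinv]
      · rw [if_neg h]
        ring
    · rw [hV1 m, hV1 l, inner_smul_left, inner_smul_right, hon, hon,
        if_neg (by simp), if_neg (by simp)]
      ring
  -- the adjoint of Vt
  have hadj : ContinuousLinearMap.adjoint Vt = c⁻¹ • Vt := by
    apply hext
    rintro ⟨l, i⟩
    apply hvec
    rintro ⟨m, j⟩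
    rw [ContinuousLinearMap.adjoint_inner_right, ContinuousLinearMap.smul_apply,
      inner_smul_right]
    exact key l m i j
  -- norm preservation
  have hnorm : ∀ v, ‖Vt v‖ = ‖v‖ := by
    intro v
    have h1 : (ContinuousLinearMap.adjoint Vt) (Vt v) = v := by
      rw [hadj]
      have h2 := congrArg (fun f : H →L[ℂ] H => f v) hsq
      simp only [ContinuousLinearMap.comp_apply, ContinuousLinearMap.smul_apply,
        ContinuousLinearMap.one_apply] at h2
      rw [ContinuousLinearMap.smul_apply, h2, smul_smul, hcinv, one_smul]
    have h2 : (inner ℂ (Vt v) (Vt v) : ℂ) = inner ℂ v v := by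
      rw [← ContinuousLinearMap.adjoint_inner_left Vt v (Vt v), h1]
    have h3 : ‖Vt v‖ ^ 2 = ‖v‖ ^ 2 := by
      have h4 := congrArg Complex.re h2
      rwa [← inner_self_eq_norm_sq (𝕜 := ℂ), ← inner_self_eq_norm_sq (𝕜 := ℂ)]
    calc ‖Vt v‖ = Real.sqrt (‖Vt v‖ ^ 2) := (Real.sqrt_sq (norm_nonneg _)).symm
      _ = Real.sqrt (‖v‖ ^ 2) := by rw [h3]
      _ = ‖v‖ := Real.sqrt_sq (norm_nonneg _)
  exact ⟨hnorm, hsq, hanti⟩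
end
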